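/- Fix a prime p, an even integer k ≥ 4, and rational numbers a, b, c (playing the roles of a(T), a(pT), a(p²T)). Suppose a₀, a₁, a₂ are rational numbers satisfying the linear system: (i) a = a₀ + a₁ + a₂; (ii) b = a₀ + (p^{k−1} + 1 − p^{−1}) a₁ + (p^{2k−3} + p^{k−1} − p^{k−3} + 1 − p^{−1}) a₂; (iii) −p^{2−k} c + (p^{k−1} + p + 1 + p^{2−k}) b − p^{k−1} a = (p+1) a₀ + (p^{2k−2} + p^{k−1} − p^{k−2} + p + 1 − p^{−1}) a₁ + (p^{2k−2} + p^{2k−3} + p^{k−1} − p^{k−3} + p + 1 − p^{−1} − p^{−2}) a₂. Then a₂ = (p³ a − (p³ + p^{4−k}) b + p^{4−k} c)/((p^{k} − 1)(p^{2k−2} − 1)). -/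

import Mathlib

/-- Solving the linear system from Lemma 3.1 for a₂. -/
theorem stmt_10 (p k : ℕ) (hp : p.Prime) (hk : 4 ≤ k) (hke : Even k)
    (a b c a₀ a₁ a₂ : ℚ)
    (h1 : a = a₀ + a₁ + a₂)
    (h2 : b = a₀ + ((p : ℚ) ^ (k - 1) + 1 - (p : ℚ)⁻¹) * a₁ +
      ((p : ℚ) ^ (2 * k - 3) + (p : ℚ) ^ (k - 1) - (p : ℚ) ^ (k - 3) + 1 - (p : ℚ)⁻¹) * a₂)
    (h3 : -(p : ℚ) ^ ((2 : ℤ) - (k : ℤ)) * c +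
        ((p : ℚ) ^ (k - 1) + (p : ℚ) + 1 + (p : ℚ) ^ ((2 : ℤ) - (k : ℤ))) * b -
        (p : ℚ) ^ (k - 1) * a =
      ((p : ℚ) + 1) * a₀ +
        ((p : ℚ) ^ (2 * k - 2) + (p : ℚ) ^ (k - 1) - (p : ℚ) ^ (k - 2) + (p : ℚ) + 1 -
          (p : ℚ)⁻¹) * a₁ +
        ((p : ℚ) ^ (2 * k - 2) + (p : ℚ) ^ (2 * k - 3) + (p : ℚ) ^ (k - 1) -
          (p : ℚ) ^ (k - 3) + (p : ℚ) + 1 - (p : ℚ)⁻¹ - ((p : ℚ) ^ 2)⁻¹) * a₂) :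
    a₂ = ((p : ℚ) ^ 3 * a - ((p : ℚ) ^ 3 + (p : ℚ) ^ ((4 : ℤ) - (k : ℤ))) * b +
        (p : ℚ) ^ ((4 : ℤ) - (k : ℤ)) * c) /
      (((p : ℚ) ^ k - 1) * ((p : ℚ) ^ (2 * k - 2) - 1)) := by
  obtain ⟨m, rfl⟩ : ∃ m, k = m + 4 := ⟨k - 4, by omega⟩
  have hp0 : (p : ℚ) ≠ 0 := by exact_mod_cast hp.ne_zero
  have hp1 : (1 : ℚ) < (p : ℚ) := by exact_mod_cast hp.one_lt
  have e1 : ((2 : ℤ) - ((m + 4 : ℕ) : ℤ)) = -((m + 2 : ℕ) : ℤ) := by push_cast; ring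
  have e2 : ((4 : ℤ) - ((m + 4 : ℕ) : ℤ)) = -((m : ℕ) : ℤ) := by push_cast; ring
  rw [e1] at h3
  rw [e2]
  simp only [zpow_neg, zpow_natCast] at h3 ⊢
  simp only [show m + 4 - 1 = m + 3 by omega, show m + 4 - 2 = m + 2 by omega,
    show m + 4 - 3 = m + 1 by omega, show 2 * (m + 4) - 2 = 2 * m + 6 by omega,
    show 2 * (m + 4) - 3 = 2 * m + 5 by omega] at h2 h3 ⊢
  have hx0 : (p : ℚ) ^ m ≠ 0 := pow_ne_zero _ hp0
  have hd1 : (p : ℚ) ^ (m + 4) - 1 ≠ 0 :=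
    sub_ne_zero.mpr (ne_of_gt (one_lt_pow₀ hp1 (by omega)))
  have hd2 : (p : ℚ) ^ (2 * m + 6) - 1 ≠ 0 :=
    sub_ne_zero.mpr (ne_of_gt (one_lt_pow₀ hp1 (by omega)))
  have hq : ∀ n : ℕ, (p : ℚ) ^ n ≠ 0 := fun n => pow_ne_zero _ hp0
  have key : a₂ * (((p : ℚ) ^ (m + 4) - 1) * ((p : ℚ) ^ (2 * m + 6) - 1)) * (p : ℚ) ^ (2 * m + 6) =
      (p : ℚ) ^ (2 * m + 9) * a - ((p : ℚ) ^ (2 * m + 9) + (p : ℚ) ^ (m + 6)) * b +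
        (p : ℚ) ^ (m + 6) * c := by
    field_simp at h2 h3
    linear_combination ((p : ℚ) ^ (2 * m + 8) * ((p : ℚ) ^ (m + 3) - p)) * h1 -
      ((p : ℚ) ^ (2 * m + 7) * ((p : ℚ) ^ (m + 3) + 1)) * h2 + (p : ℚ) ^ (m + 4) * h3
  have hN : (p : ℚ) ^ 3 * a - ((p : ℚ) ^ 3 + ((p : ℚ) ^ m)⁻¹) * b + ((p : ℚ) ^ m)⁻¹ * c =
      ((p : ℚ) ^ (2 * m + 9) * a - ((p : ℚ) ^ (2 * m + 9) + (p : ℚ) ^ (m + 6)) * b +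
        (p : ℚ) ^ (m + 6) * c) / (p : ℚ) ^ (2 * m + 6) := by
    rw [eq_div_iff (hq _)]
    field_simp
    ring
  rw [eq_div_iff (mul_ne_zero hd1 hd2), hN, eq_div_iff (hq _)]
  linear_combination key
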